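/- Let 𝔯 be a relational database over schema R. A set U ⊆ R is an inclusion-wise minimal unique column combination of 𝔯 if and only if U is a minimal hitting set of the hypergraph of inclusion-wise minimal difference sets of 𝔯. -/

import Mathlib

/-- A set `U` of attributes is a unique column combination (UCC) of the database `db`. -/
def IsUCC {R V : Type*} (db : Set (R → V)) (U : Set R) : Prop :=
  ∀ r ∈ db, ∀ s ∈ db, (∀ a ∈ U, r a = s a) → r = s

/-- `U` is an inclusion-wise minimal UCC of `db`. -/
def IsMinUCC {R V : Type*} (db : Set (R → V)) (U : Set R) : Prop :=
  IsUCC db U ∧ ∀ U' ⊂ U, ¬ IsUCC db U'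

/-- The difference set of two rows: the attributes on which they disagree. -/
def diffSet {R V : Type*} (r s : R → V) : Set R := {a | r a ≠ s a}

/-- The hypergraph of difference sets of pairs of distinct rows of `db`. -/
def diffSets {R V : Type*} (db : Set (R → V)) : Set (Set R) :=
  {D | ∃ r ∈ db, ∃ s ∈ db, r ≠ s ∧ D = diffSet r s}

/-- The hypergraph of inclusion-wise minimal difference sets of `db`. -/
def minDiffSets {R V : Type*} (db : Set (R → V)) : Set (Set R) :=
  {D ∈ diffSets db | ∀ D' ∈ diffSets db, D' ⊆ D → D' = D}

/-- `T` is a hitting set of the hypergraph `H`: it intersects every edge. -/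
def IsHittingSet {α : Type*} (H : Set (Set α)) (T : Set α) : Prop :=
  ∀ E ∈ H, (T ∩ E).Nonempty

/-- `T` is an inclusion-wise minimal hitting set of the hypergraph `H`. -/
def IsMinHittingSet {α : Type*} (H : Set (Set α)) (T : Set α) : Prop :=
  IsHittingSet H T ∧ ∀ T' ⊂ T, ¬ IsHittingSet H T'

/-- A set `U ⊆ R` is an inclusion-wise minimal unique column combination of a database `𝔯`
if and only if `U` is a minimal hitting set of the hypergraph of inclusion-wise minimal
difference sets of `𝔯`. -/

lemma diffSets_finite {R V : Type*} {db : Set (R → V)} (hfin : db.Finite) :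
    (diffSets db).Finite := by
  apply Set.Finite.subset ((hfin.prod hfin).image (fun p => diffSet p.1 p.2))
  rintro D ⟨r, hr, s, hs, hrs, rfl⟩
  exact ⟨(r, s), ⟨hr, hs⟩, rfl⟩

lemma exists_min_subset {R V : Type*} {db : Set (R → V)} (hfin : db.Finite)
    {D : Set R} (hD : D ∈ diffSets db) :
    ∃ D' ∈ minDiffSets db, D' ⊆ D := by
  have hf : ({E ∈ diffSets db | E ⊆ D} : Set (Set R)).Finite :=
    (diffSets_finite hfin).subset fun E hE => hE.1
  obtain ⟨D', hD', hmin⟩ := Set.Finite.exists_minimalFor id _ hf ⟨D, hD, subset_rfl⟩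
  refine ⟨D', ⟨hD'.1, fun E hE hsub => ?_⟩, hD'.2⟩
  exact Set.Subset.antisymm hsub (hmin (j := E) ⟨hE, hsub.trans hD'.2⟩ hsub)

lemma ucc_iff_hs {R V : Type*} {db : Set (R → V)} (hfin : db.Finite) (U : Set R) :
    IsUCC db U ↔ IsHittingSet (minDiffSets db) U := by
  constructor
  · rintro h D ⟨⟨r, hr, s, hs, hrs, rfl⟩, -⟩
    by_contra hne
    exact hrs (h r hr s hs fun a ha => by
      by_contra hcon
      exact hne ⟨a, ha, hcon⟩)
  · intro h r hr s hs hag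
    by_contra hrs
    obtain ⟨D', hD', hsub⟩ := exists_min_subset hfin ⟨r, hr, s, hs, hrs, rfl⟩
    obtain ⟨a, haU, haD⟩ := h D' hD'
    exact hsub haD (hag a haU)

theorem minUCC_iff_minHittingSet_minDiffSets {R V : Type*} (db : Set (R → V))
    (hfin : db.Finite) (U : Set R) :
    IsMinUCC db U ↔ IsMinHittingSet (minDiffSets db) U := by
  unfold IsMinUCC IsMinHittingSet
  simp only [ucc_iff_hs hfin]
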